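/- For every real number x with −1 ≤ x ≤ 1, it holds that 1 − arccos(x)/π ≥ (0.878/2)·(1 + x). -/

import Mathlib

open Real

lemma nonneg_of_deriv {f g : ℝ → ℝ} (h0 : f 0 = 0)
    (hf : ∀ t, HasDerivAt f (g t) t) (hg : ∀ t, 0 ≤ t → 0 ≤ g t) :
    ∀ t, 0 ≤ t → 0 ≤ f t := by
  intro t ht
  have mono : MonotoneOn f (Set.Ici (0:ℝ)) := by
    apply monotoneOn_of_deriv_nonneg (convex_Ici 0)
    · exact fun x _ => (hf x).differentiableAt.continuousAt.continuousWithinAt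
    · intro x _
      exact (hf x).differentiableAt.differentiableWithinAt
    · intro x hx
      rw [(hf x).deriv]
      rw [interior_Ici] at hx
      exact hg x (le_of_lt hx)
  have h := mono (Set.self_mem_Ici) (Set.mem_Ici.2 ht) ht
  rw [h0] at h
  exact h

lemma cos_taylor10 (t : ℝ) (ht : 0 ≤ t) :
    1 - t^2/2 + t^4/24 - t^6/720 + t^8/40320 - t^10/3628800 ≤ Real.cos t := by
  have h9 : ∀ s : ℝ, 0 ≤ s → 0 ≤ s - Real.sin s := fun s hs => by
    linarith [Real.sin_le hs]
  have h8 : ∀ s : ℝ, 0 ≤ s → 0 ≤ s^2/2 - 1 + Real.cos s := by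
    refine nonneg_of_deriv (f := fun s : ℝ => s^2/2 - 1 + Real.cos s) (g := fun s : ℝ => s - Real.sin s) (by norm_num) (fun s => ?_) h9
    have h := (((hasDerivAt_pow 2 s).div_const 2).sub_const 1).add (Real.hasDerivAt_cos s)
    refine h.congr_deriv ?_
    push_cast
    ring
  have h7 : ∀ s : ℝ, 0 ≤ s → 0 ≤ s^3/6 - s + Real.sin s := by
    refine nonneg_of_deriv (f := fun s : ℝ => s^3/6 - s + Real.sin s) (g := fun s : ℝ => s^2/2 - 1 + Real.cos s) (by norm_num) (fun s => ?_) h8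
    have h := (((hasDerivAt_pow 3 s).div_const 6).sub (hasDerivAt_id s)).add (Real.hasDerivAt_sin s)
    refine h.congr_deriv ?_
    push_cast
    ring
  have h6 : ∀ s : ℝ, 0 ≤ s → 0 ≤ s^4/24 - s^2/2 + 1 - Real.cos s := by
    refine nonneg_of_deriv (f := fun s : ℝ => s^4/24 - s^2/2 + 1 - Real.cos s) (g := fun s : ℝ => s^3/6 - s + Real.sin s) (by norm_num) (fun s => ?_) h7
    have h := ((((hasDerivAt_pow 4 s).div_const 24).sub ((hasDerivAt_pow 2 s).div_const 2)).add_const 1).sub (Real.hasDerivAt_cos s)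
    refine h.congr_deriv ?_
    push_cast
    ring
  have h5 : ∀ s : ℝ, 0 ≤ s → 0 ≤ s^5/120 - s^3/6 + s - Real.sin s := by
    refine nonneg_of_deriv (f := fun s : ℝ => s^5/120 - s^3/6 + s - Real.sin s) (g := fun s : ℝ => s^4/24 - s^2/2 + 1 - Real.cos s) (by norm_num) (fun s => ?_) h6
    have h := ((((hasDerivAt_pow 5 s).div_const 120).sub ((hasDerivAt_pow 3 s).div_const 6)).add (hasDerivAt_id s)).sub (Real.hasDerivAt_sin s)
    refine h.congr_deriv ?_
    push_cast
    ring
  have h4 : ∀ s : ℝ, 0 ≤ s → 0 ≤ s^6/720 - s^4/24 + s^2/2 - 1 + Real.cos s := by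
    refine nonneg_of_deriv (f := fun s : ℝ => s^6/720 - s^4/24 + s^2/2 - 1 + Real.cos s) (g := fun s : ℝ => s^5/120 - s^3/6 + s - Real.sin s) (by norm_num) (fun s => ?_) h5
    have h := (((((hasDerivAt_pow 6 s).div_const 720).sub ((hasDerivAt_pow 4 s).div_const 24)).add ((hasDerivAt_pow 2 s).div_const 2)).sub_const 1).add (Real.hasDerivAt_cos s)
    refine h.congr_deriv ?_
    push_cast
    ring
  have h3 : ∀ s : ℝ, 0 ≤ s → 0 ≤ s^7/5040 - s^5/120 + s^3/6 - s + Real.sin s := by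
    refine nonneg_of_deriv (f := fun s : ℝ => s^7/5040 - s^5/120 + s^3/6 - s + Real.sin s) (g := fun s : ℝ => s^6/720 - s^4/24 + s^2/2 - 1 + Real.cos s) (by norm_num) (fun s => ?_) h4
    have h := (((((hasDerivAt_pow 7 s).div_const 5040).sub ((hasDerivAt_pow 5 s).div_const 120)).add ((hasDerivAt_pow 3 s).div_const 6)).sub (hasDerivAt_id s)).add (Real.hasDerivAt_sin s)
    refine h.congr_deriv ?_
    push_cast
    ring
  have h2 : ∀ s : ℝ, 0 ≤ s → 0 ≤ s^8/40320 - s^6/720 + s^4/24 - s^2/2 + 1 - Real.cos s := by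
    refine nonneg_of_deriv (f := fun s : ℝ => s^8/40320 - s^6/720 + s^4/24 - s^2/2 + 1 - Real.cos s) (g := fun s : ℝ => s^7/5040 - s^5/120 + s^3/6 - s + Real.sin s) (by norm_num) (fun s => ?_) h3
    have h := ((((((hasDerivAt_pow 8 s).div_const 40320).sub ((hasDerivAt_pow 6 s).div_const 720)).add ((hasDerivAt_pow 4 s).div_const 24)).sub ((hasDerivAt_pow 2 s).div_const 2)).add_const 1).sub (Real.hasDerivAt_cos s)
    refine h.congr_deriv ?_
    push_cast
    ring
  have h1 : ∀ s : ℝ, 0 ≤ s → 0 ≤ s^9/362880 - s^7/5040 + s^5/120 - s^3/6 + s - Real.sin s := by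
    refine nonneg_of_deriv (f := fun s : ℝ => s^9/362880 - s^7/5040 + s^5/120 - s^3/6 + s - Real.sin s) (g := fun s : ℝ => s^8/40320 - s^6/720 + s^4/24 - s^2/2 + 1 - Real.cos s) (by norm_num) (fun s => ?_) h2
    have h := ((((((hasDerivAt_pow 9 s).div_const 362880).sub ((hasDerivAt_pow 7 s).div_const 5040)).add ((hasDerivAt_pow 5 s).div_const 120)).sub ((hasDerivAt_pow 3 s).div_const 6)).add (hasDerivAt_id s)).sub (Real.hasDerivAt_sin s)
    refine h.congr_deriv ?_
    push_cast
    ring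
  have h0 : ∀ s : ℝ, 0 ≤ s → 0 ≤ s^10/3628800 - s^8/40320 + s^6/720 - s^4/24 + s^2/2 - 1 + Real.cos s := by
    refine nonneg_of_deriv (f := fun s : ℝ => s^10/3628800 - s^8/40320 + s^6/720 - s^4/24 + s^2/2 - 1 + Real.cos s) (g := fun s : ℝ => s^9/362880 - s^7/5040 + s^5/120 - s^3/6 + s - Real.sin s) (by norm_num) (fun s => ?_) h1
    have h := (((((((hasDerivAt_pow 10 s).div_const 3628800).sub ((hasDerivAt_pow 8 s).div_const 40320)).add ((hasDerivAt_pow 6 s).div_const 720)).sub ((hasDerivAt_pow 4 s).div_const 24)).add ((hasDerivAt_pow 2 s).div_const 2)).sub_const 1).add (Real.hasDerivAt_cos s)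
    refine h.congr_deriv ?_
    push_cast
    ring
  linarith [h0 t ht]

lemma poly_key (t : ℝ) (h0 : (29:ℝ)/20 ≤ t) (h1 : t ≤ 69/25) :
    0 ≤ (72507/100000)*t - t^2/2 + t^4/24 - t^6/720 + t^8/40320 - t^10/3628800 := by
  rcases le_or_gt t (421/200) with hc | hc
  · have ha : (0:ℝ) ≤ t - 29/20 := by linarith
    have hb : (0:ℝ) ≤ 421/200 - t := by linarith
    have e : (72507/100000)*t - t^2/2 + t^4/24 - t^6/720 + t^8/40320 - t^10/3628800 = (15964777619867239497500000000000000/248531360985405919678603633527807 : ℝ) * (t - 29/20)^0 * (421/200 - t)^14 + (69073777242962114622500000000000000/82843786995135306559534544509269 : ℝ) * (t - 29/20)^1 * (421/200 - t)^13 + (1238680992668760210518875000000000000/248531360985405919678603633527807 : ℝ) * (t - 29/20)^2 * (421/200 - t)^12 + (4516405918090214246175800000000000000/248531360985405919678603633527807 : ℝ) * (t - 29/20)^3 * (421/200 - t)^11 + (3737387858395298000633132500000000000/82843786995135306559534544509269 : ℝ) * (t - 29/20)^4 * (421/200 - t)^10 + (20027268359041765563215881300000000000/248531360985405919678603633527807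 : ℝ) * (t - 29/20)^5 * (421/200 - t)^9 + (2945507205557069660457401075000000000/27614595665045102186511514836423 : ℝ) * (t - 29/20)^6 * (421/200 - t)^8 + (418653850212554235548267210000000000/3944942237863586026644502119489 : ℝ) * (t - 29/20)^7 * (421/200 - t)^7 + (2198066499541910310798890004875000000/27614595665045102186511514836423 : ℝ) * (t - 29/20)^8 * (421/200 - t)^6 + (11105029340039232376542841694275000000/248531360985405919678603633527807 : ℝ) * (t - 29/20)^9 * (421/200 - t)^5 + (1526401105673375230320372795933250000/82843786995135306559534544509269 : ℝ) * (t - 29/20)^10 * (421/200 - t)^4 + (1340188611524103872741372035949000000/248531360985405919678603633527807 : ℝ) * (t - 29/20)^11 * (421/200 - t)^3 + (262039057920844338242709295673500000/248531360985405919678603633527807 : ℝ) * (t - 29/20)^12 * (421/200 - t)^2 + (10165862835969016569969638858000000/82843786995135306559534544509269 : ℝ) * (t - 29/20)^13 * (421/200 - t)^1 + (1588646016715069367918274449750000/248531360985405919678603633527807 : ℝ) * (t - 29/20)^14 * (421/200 - t)^0 := by ring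
    rw [e]
    repeat' apply add_nonneg
    all_goals exact mul_nonneg (mul_nonneg (by norm_num) (pow_nonneg ha _)) (pow_nonneg hb _)
  · rcases le_or_gt t (973/400) with hd | hd
    · have ha : (0:ℝ) ≤ t - 421/200 := by linarith
      have hb : (0:ℝ) ≤ 973/400 - t := by linarith
      have e : (72507/100000)*t - t^2/2 + t^4/24 - t^6/720 + t^8/40320 - t^10/3628800 = (26028376337859696523973008584704000000/248531360985405919678603633527807 : ℝ) * (t - 421/200)^0 * (973/400 - t)^14 + (98919886012759691926619778568192000000/82843786995135306559534544509269 : ℝ) * (t - 421/200)^1 * (973/400 - t)^13 + (1530815257813447523865920813599744000000/248531360985405919678603633527807 : ℝ) * (t - 421/200)^2 * (973/400 - t)^12 + (4704508709583350078547772345327616000000/248531360985405919678603633527807 : ℝ) * (t - 421/200)^3 * (973/400 - t)^11 + (353121043528913971842090465935872000000/9204865221681700728837171612141 : ℝ) * (t - 421/200)^4 * (973/400 - t)^10 + (13299670614097378856304398859991552000000/248531360985405919678603633527807 : ℝ) * (t - 421/200)^5 * (973/400 - t)^9 + (1434646543570310919585622209110912000000/27614595665045102186511514836423 : ℝ) *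 (t - 421/200)^6 * (973/400 - t)^8 + (136924040539722745445074734804224000000/3944942237863586026644502119489 : ℝ) * (t - 421/200)^7 * (973/400 - t)^7 + (62137655975256275700699253422416000000/3944942237863586026644502119489 : ℝ) * (t - 421/200)^8 * (973/400 - t)^6 + (196894138854470844335033830993936000000/35504480140772274239800519075401 : ℝ) * (t - 421/200)^9 * (973/400 - t)^5 + (32697609496410475850670990661964000000/11834826713590758079933506358467 : ℝ) * (t - 421/200)^10 * (973/400 - t)^4 + (68305778756675572322715718000688000000/35504480140772274239800519075401 : ℝ) * (t - 421/200)^11 * (973/400 - t)^3 + (33645906626500346726252705261992000000/35504480140772274239800519075401 : ℝ) * (t - 421/200)^12 * (973/400 - t)^2 + (111753303124578162362762805728000000/438326915318176225182722457721 : ℝ) * (t - 421/200)^13 * (973/400 - t)^1 + (1020415436450168978117599528772000000/35504480140772274239800519075401 : ℝ) * (t - 421/200)^14 * (973/400 - t)^0 := by ring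
      rw [e]
      repeat' apply add_nonneg
      all_goals exact mul_nonneg (mul_nonneg (by norm_num) (pow_nonneg ha _)) (pow_nonneg hb _)
    · have ha : (0:ℝ) ≤ t - 973/400 := by linarith
      have hb : (0:ℝ) ≤ 69/25 - t := by linarith
      have e : (72507/100000)*t - t^2/2 + t^4/24 - t^6/720 + t^8/40320 - t^10/3628800 = (1020415436450168978117599528772000000/35504480140772274239800519075401 : ℝ) * (t - 973/400)^0 * (69/25 - t)^14 + (19519614667513900235908999541648000000/35504480140772274239800519075401 : ℝ) * (t - 973/400)^1 * (69/25 - t)^13 + (56574889704666748275026821623944000000/11834826713590758079933506358467 : ℝ) * (t - 973/400)^2 * (69/25 - t)^12 + (886416254657885494154057409713168000000/35504480140772274239800519075401 : ℝ) * (t - 973/400)^3 * (69/25 - t)^11 + (3109842513952545051348350157990212000000/35504480140772274239800519075401 : ℝ) * (t - 973/400)^4 * (69/25 - t)^10 + (2590433493495553025402632940377984000000/11834826713590758079933506358467 : ℝ) * (t - 973/400)^5 * (69/25 - t)^9 + (1589022079029729439151387905436672000000/3944942237863586026644502119489 : ℝ) * (t - 973/400)^6 * (69/25 - t)^8 + (2192761664126836051707569172512768000000/3944942237863586026644502119489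 : ℝ) * (t - 973/400)^7 * (69/25 - t)^7 + (15993288856492023501589194139500544000000/27614595665045102186511514836423 : ℝ) * (t - 973/400)^8 * (69/25 - t)^6 + (4181121245980007916258941355425792000000/9204865221681700728837171612141 : ℝ) * (t - 973/400)^9 * (69/25 - t)^5 + (2433303406142076644119024687382528000000/9204865221681700728837171612141 : ℝ) * (t - 973/400)^10 * (69/25 - t)^4 + (340079586443400958776703832817664000000/3068288407227233576279057204047 : ℝ) * (t - 973/400)^11 * (69/25 - t)^3 + (97211824764424408844768804601856000000/3068288407227233576279057204047 : ℝ) * (t - 973/400)^12 * (69/25 - t)^2 + (16972716601451341755655686979584000000/3068288407227233576279057204047 : ℝ) * (t - 973/400)^13 * (69/25 - t)^1 + (1366615162861107275722093756416000000/3068288407227233576279057204047 : ℝ) * (t - 973/400)^14 * (69/25 - t)^0 := by ring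
      rw [e]
      repeat' apply add_nonneg
      all_goals exact mul_nonneg (mul_nonneg (by norm_num) (pow_nonneg ha _)) (pow_nonneg hb _)

lemma cos_key (t : ℝ) (h0 : 0 ≤ t) (h1 : t ≤ 69/25) :
    1 - (72507/100000)*t ≤ Real.cos t := by
  rcases le_or_gt t (29/20) with hc | hc
  · have h := Real.one_sub_sq_div_two_le_cos (x := t)
    nlinarith
  · have hp := cos_taylor10 t h0
    have hr := poly_key t (le_of_lt hc) h1
    linarith

theorem one_sub_arccos_ge_gw (x : ℝ) (h1 : -1 ≤ x) (h2 : x ≤ 1) :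
    1 - Real.arccos x / Real.pi ≥ (0.878 / 2) * (1 + x) := by
  have hπu : Real.pi < 3.141593 := Real.pi_lt_d6
  have hπl : (3.141592:ℝ) < Real.pi := Real.pi_gt_d6
  have hπpos : 0 < Real.pi := Real.pi_pos
  have hx0 : (0:ℝ) ≤ 1 + x := by linarith
  set t : ℝ := 0.439 * Real.pi * (1 + x) with htdef
  have ht0 : 0 ≤ t := by positivity
  have htT : t ≤ 69/25 := by rw [htdef]; nlinarith
  have hcos := cos_key t ht0 htT
  have hkt : (72507/100000) * t ≤ 1 + x := by
    rw [htdef]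
    nlinarith
  have hbound : -x ≤ Real.cos t := by linarith
  have htpi : t ≤ Real.pi := by rw [htdef]; nlinarith
  have harc : Real.arccos x ≤ Real.pi - t := by
    have h3 : Real.arccos x ≤ Real.arccos (-Real.cos t) := by
      rw [Real.arccos_eq_pi_div_two_sub_arcsin, Real.arccos_eq_pi_div_two_sub_arcsin]
      have hb2 : -Real.cos t ≤ x := by linarith
      have := Real.monotone_arcsin hb2
      linarith
    have h4 : Real.arccos (-Real.cos t) = Real.pi - t := by
      rw [← Real.cos_pi_sub, Real.arccos_cos (by linarith) (by linarith)]
    linarith [h4 ▸ h3]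
  rw [ge_iff_le, ← sub_nonneg]
  have expand : 1 - Real.arccos x / Real.pi - 0.878 / 2 * (1 + x)
      = (Real.pi - t - Real.arccos x) / Real.pi := by
    rw [htdef]
    field_simp
    ring
  rw [expand]
  exact div_nonneg (by linarith) hπpos.le
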